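/- Let L be a regular tree language and A_can its canonical bottom-up automaton. Then A_can is a bottom-up residual finite tree automaton; more precisely, for every state q of A_can, the state language of q in A_can equals the prime residual associated to q: C_q = t_q⁻¹L. -/

import Mathlib

/-- Terms over a ranked alphabet `F` with arity function `arity`. -/
inductive Term (F : Type) (arity : F → ℕ) : Type where
  | node (f : F) (children : Fin (arity f) → Term F arity) : Term F arity

/-- Contexts: terms with exactly one occurrence of the hole `◇`. -/
inductive Ctx (F : Type) (arity : F → ℕ) : Type where
  | hole : Ctx F arity
  | node (f : F) (i : Fin (arity f)) (c : Ctx F arity)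
      (sib : (j : Fin (arity f)) → j ≠ i → Term F arity) : Ctx F arity

/-- `c.fill t` replaces the hole of `c` by the term `t`. -/
def Ctx.fill {F : Type} {arity : F → ℕ} : Ctx F arity → Term F arity → Term F arity
  | .hole, t => t
  | .node f i c sib, t => .node f (fun j => if h : j = i then c.fill t else sib j h)

/-- Bottom-up residual of the tree language `L` w.r.t. the term `t`:
the set of contexts `c` with `c[t] ∈ L`. -/
def bres {F : Type} {arity : F → ℕ} (L : Set (Term F arity)) (t : Term F arity) :
    Set (Ctx F arity) := {c | c.fill t ∈ L}

/-- Bottom-up finite tree automaton with state type `Q`: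
final states and a set of rules `f(q₁,…,qₙ) → q`. -/
structure BUTA (F : Type) (arity : F → ℕ) (Q : Type) where
  final : Set Q
  rules : (f : F) → (Fin (arity f) → Q) → Q → Prop

/-- Reachability `t →*_A q`. -/
inductive BUTA.Reach {F Q : Type} {arity : F → ℕ} (A : BUTA F arity Q) :
    Term F arity → Q → Prop
  | node {f : F} {ch : Fin (arity f) → Term F arity} {qs : Fin (arity f) → Q} {q : Q} :
      A.rules f qs q → (∀ i, A.Reach (ch i) (qs i)) → A.Reach (.node f ch) q

/-- Language recognized by a bottom-up tree automaton. -/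
def BUTA.lang {F Q : Type} {arity : F → ℕ} (A : BUTA F arity Q) : Set (Term F arity) :=
  {t | ∃ q ∈ A.final, A.Reach t q}

/-- `A.CReach q0 c q` : putting state `q0` in the hole of `c`, the automaton can reach `q`
at the root (extending `→*_A` to terms over `F ∪ Q` by `q →*_A q`). -/
inductive BUTA.CReach {F Q : Type} {arity : F → ℕ} (A : BUTA F arity Q) (q0 : Q) :
    Ctx F arity → Q → Prop
  | hole : A.CReach q0 .hole q0
  | node {f : F} {i : Fin (arity f)} {c : Ctx F arity}
      {sib : (j : Fin (arity f)) → j ≠ i → Term F arity}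
      {qs : Fin (arity f) → Q} {q : Q} :
      A.rules f qs q → A.CReach q0 c (qs i) →
      (∀ j (h : j ≠ i), A.Reach (sib j h) (qs j)) →
      A.CReach q0 (.node f i c sib) q

/-- State language `C_q`: the set of contexts accepted by the state `q`. -/
def BUTA.stateLang {F Q : Type} {arity : F → ℕ} (A : BUTA F arity Q) (q : Q) :
    Set (Ctx F arity) := {c | ∃ qf ∈ A.final, A.CReach q c qf}

/-- A bottom-up automaton is deterministic iff no two rules share a left-hand side. -/
def BUTA.Deterministic {F Q : Type} {arity : F → ℕ} (A : BUTA F arity Q) : Prop :=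
  ∀ (f : F) (qs : Fin (arity f) → Q) (q q' : Q), A.rules f qs q → A.rules f qs q' → q = q'

/-- Bottom-up residual finite tree automaton: each state language is a residual of `L(A)`. -/
def IsRFTA {F Q : Type} {arity : F → ℕ} (A : BUTA F arity Q) : Prop :=
  ∀ q : Q, ∃ t : Term F arity, A.stateLang q = bres A.lang t

/-- A bottom-up residual is composite iff it is the union of the bottom-up residuals
of `L` that it strictly contains. -/
def IsCompositeRes {F : Type} {arity : F → ℕ} (L : Set (Term F arity))
    (t : Term F arity) : Prop :=
  bres L t = ⋃ t' ∈ {t' : Term F arity | bres L t' ⊂ bres L t}, bres L t'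

/-- A bottom-up residual is prime iff it is not composite. -/
def IsPrimeRes {F : Type} {arity : F → ℕ} (L : Set (Term F arity))
    (t : Term F arity) : Prop := ¬ IsCompositeRes L t

/-- The canonical bottom-up automaton of `L`, given a family `tq` of representative terms
(one per prime bottom-up residual of `L`): final states are the `q` with `◇ ∈ t_q⁻¹L`,
and the rules are the `f(q₁,…,qₙ) → q` with `t_q⁻¹L ⊆ f(t_{q₁},…,t_{qₙ})⁻¹L`. -/
def canonBU {F : Type} {arity : F → ℕ} (L : Set (Term F arity)) {Q : Type}
    (tq : Q → Term F arity) : BUTA F arity Q where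
  final := {q | Ctx.hole ∈ bres L (tq q)}
  rules f qs q := bres L (tq q) ⊆ bres L (.node f (fun i => tq (qs i)))

namespace CanonAux

variable {F : Type} {arity : F → ℕ}

/-- Composition of contexts: `(ccomp c d).fill t = c.fill (d.fill t)`. -/
def ccomp : Ctx F arity → Ctx F arity → Ctx F arity
  | .hole, d => d
  | .node f i c sib, d => .node f i (ccomp c d) sib

lemma fill_ccomp (c d : Ctx F arity) (t : Term F arity) :
    (ccomp c d).fill t = c.fill (d.fill t) := by
  induction c with
  | hole => rfl
  | node f i c sib ih => simp only [ccomp, Ctx.fill, ih]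

lemma ccomp_hole (c : Ctx F arity) : ccomp c .hole = c := by
  induction c with
  | hole => rfl
  | node f i c sib ih => simp only [ccomp, ih]

lemma ccomp_assoc (a b c : Ctx F arity) :
    ccomp (ccomp a b) c = ccomp a (ccomp b c) := by
  induction a with
  | hole => rfl
  | node f i a sib ih => simp only [ccomp, ih]

/-- Size of a context (depth of the hole). -/
def csize : Ctx F arity → ℕ
  | .hole => 0
  | .node _ _ c _ => csize c + 1

lemma snoc_view (c : Ctx F arity) : c = .hole ∨
    ∃ (f : F) (i : Fin (arity f)) (sib : ∀ j, j ≠ i → Term F arity) (c₁ : Ctx F arity),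
      c = ccomp c₁ (.node f i .hole sib) ∧ csize c₁ + 1 = csize c := by
  induction c with
  | hole => exact Or.inl rfl
  | node f i c sib ih =>
    right
    rcases ih with h | ⟨f', i', sib', c₁, hc, hs⟩
    · subst h; exact ⟨f, i, sib, .hole, rfl, rfl⟩
    · refine ⟨f', i', sib', .node f i c₁ sib, ?_, ?_⟩
      · rw [hc]; rfl
      · simp only [csize, ← hs]

/-- Sequential replacement of all children of a node, preserving membership in `L`. -/
lemma replace_all (L : Set (Term F arity)) (f : F)
    (ch : Fin (arity f) → Term F arity)
    (RP : Fin (arity f) → Term F arity → Prop)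
    (H : ∀ i (d : Ctx F arity), d.fill (ch i) ∈ L → ∃ u, RP i u ∧ d.fill u ∈ L)
    (c : Ctx F arity) (hc : c.fill (.node f ch) ∈ L) :
    ∃ ch' : Fin (arity f) → Term F arity,
      (∀ i, RP i (ch' i)) ∧ c.fill (.node f ch') ∈ L := by
  have loop : ∀ k : ℕ, ∃ ch' : Fin (arity f) → Term F arity,
      (∀ i : Fin (arity f), (i.val < k → RP i (ch' i)) ∧ (¬ i.val < k → ch' i = ch i)) ∧
      c.fill (.node f ch') ∈ L := by
    intro k
    induction k with
    | zero => exact ⟨ch, fun i => ⟨fun h => absurd h (Nat.not_lt_zero _), fun _ => rfl⟩, hc⟩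
    | succ k ihk =>
      obtain ⟨ch', h1, h2⟩ := ihk
      by_cases hk : k < arity f
      · set i0 : Fin (arity f) := ⟨k, hk⟩ with hi0
        have hch'i0 : ch' i0 = ch i0 := (h1 i0).2 (by simp [hi0])
        have hd : (ccomp c (.node f i0 .hole (fun j _ => ch' j))).fill (ch i0) ∈ L := by
          have heq : (ccomp c (.node f i0 .hole (fun j _ => ch' j))).fill (ch i0)
              = c.fill (.node f ch') := by
            rw [fill_ccomp]
            show c.fill (.node f (fun j => if h : j = i0 then ch i0 else ch' j)) = _
            congr 1
            congr 1
            funext j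
            by_cases hj : j = i0
            · subst hj; rw [dif_pos rfl, hch'i0]
            · rw [dif_neg hj]
          rw [heq]; exact h2
        obtain ⟨u, hRP, hu⟩ := H i0 _ hd
        refine ⟨fun j => if h : j = i0 then u else ch' j, fun i => ⟨?_, ?_⟩, ?_⟩
        · intro hik
          beta_reduce
          by_cases hi : i = i0
          · subst hi; rw [dif_pos rfl]; exact hRP
          · rw [dif_neg hi]
            have : i.val < k := by
              rcases Nat.lt_succ_iff_lt_or_eq.mp hik with h | h
              · exact h
              · exact absurd (Fin.ext h : i = i0) hi
            exact (h1 i).1 this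
        · intro hik
          have hi : i ≠ i0 := by
            rintro rfl
            exact hik (Nat.lt_succ_self k)
          beta_reduce
          rw [dif_neg hi]
          exact (h1 i).2 (fun h => hik (Nat.lt_succ_of_lt h))
        · have heq : c.fill (.node f (fun j => if h : j = i0 then u else ch' j))
              = (ccomp c (.node f i0 .hole (fun j _ => ch' j))).fill u := by
            rw [fill_ccomp]; rfl
          rw [heq]; exact hu
      · refine ⟨ch', fun i => ⟨fun _ => (h1 i).1 (lt_of_lt_of_le i.isLt (Nat.le_of_not_lt hk)), ?_⟩, h2⟩
        intro hik
        exact absurd (Nat.lt_succ_of_lt (lt_of_lt_of_le i.isLt (Nat.le_of_not_lt hk))) hik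
  obtain ⟨ch', h1, h2⟩ := loop (arity f)
  exact ⟨ch', fun i => (h1 i).1 i.isLt, h2⟩

/-- Monotonicity: replacing children by children with larger residuals. -/
lemma bres_node_mono (L : Set (Term F arity)) (f : F)
    (ch ch' : Fin (arity f) → Term F arity)
    (hme : ∀ i, bres L (ch i) ⊆ bres L (ch' i)) :
    bres L (.node f ch) ⊆ bres L (.node f ch') := by
  intro c hc
  obtain ⟨ch'', h1, h2⟩ := replace_all L f ch (fun i u => u = ch' i)
    (fun i d hd => ⟨ch' i, rfl, hme i hd⟩) c hc
  have he : ch'' = ch' := funext h1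
  rw [← he]
  exact h2

/-- Decomposition of a run on `c.fill t`. -/
lemma reach_fill_iff {Q' : Type} (A : BUTA F arity Q') (c : Ctx F arity)
    (t : Term F arity) (q : Q') :
    A.Reach (c.fill t) q ↔ ∃ q0, A.Reach t q0 ∧ A.CReach q0 c q := by
  induction c generalizing q with
  | hole =>
    constructor
    · intro h; exact ⟨q, h, .hole⟩
    · rintro ⟨q0, h, hc⟩; cases hc; exact h
  | node f i c sib ih =>
    constructor
    · intro h
      cases h with
      | node hr hch =>
        have hi := hch i
        beta_reduce at hi
        rw [dif_pos rfl] at hi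
        obtain ⟨q0, ht, hc⟩ := (ih _).mp hi
        refine ⟨q0, ht, .node hr hc (fun j hj => ?_)⟩
        have := hch j
        beta_reduce at this
        rwa [dif_neg hj] at this
    · rintro ⟨q0, ht, hc⟩
      cases hc with
      | node hr hcc hsib =>
        refine .node hr (fun j => ?_)
        beta_reduce
        by_cases hj : j = i
        · subst hj
          rw [dif_pos rfl]
          exact (ih _).mpr ⟨q0, ht, hcc⟩
        · rw [dif_neg hj]
          exact hsib j hj

/-- Regularity implies finitely many bottom-up residuals. -/
lemma bres_range_finite (L : Set (Term F arity))
    (hreg : ∃ (Q' : Type) (_ : Fintype Q') (A : BUTA F arity Q'), A.lang = L) :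
    (Set.range fun t => bres L t).Finite := by
  obtain ⟨Q', hQ', A, hA⟩ := hreg
  have key : ∀ t, bres L t
      = (fun S : Set Q' => {c | ∃ q0 ∈ S, ∃ qf ∈ A.final, A.CReach q0 c qf})
        {q | A.Reach t q} := by
    intro t; ext c
    simp only [bres, Set.mem_setOf_eq, ← hA, BUTA.lang]
    constructor
    · rintro ⟨qf, hqf, h⟩
      obtain ⟨q0, ht, hc⟩ := (reach_fill_iff A c t qf).mp h
      exact ⟨q0, ht, qf, hqf, hc⟩
    · rintro ⟨q0, ht, qf, hqf, hc⟩
      exact ⟨qf, hqf, (reach_fill_iff A c t qf).mpr ⟨q0, ht, hc⟩⟩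
  apply Set.Finite.subset
    (Set.Finite.image (fun S : Set Q' => {c | ∃ q0 ∈ S, ∃ qf ∈ A.final, A.CReach q0 c qf})
      Set.finite_univ)
  rintro R ⟨t, rfl⟩
  exact ⟨{q | A.Reach t q}, Set.mem_univ _, (key t).symm⟩

/-- Prime decomposition: every residual is a union of the prime residuals it contains. -/
lemma primeDecomp {Q : Type} (L : Set (Term F arity)) (tq : Q → Term F arity)
    (hfin : (Set.range fun t => bres L t).Finite)
    (hsurj : ∀ t : Term F arity, IsPrimeRes L t → ∃ q, bres L (tq q) = bres L t) :
    ∀ (t : Term F arity) (c : Ctx F arity), c ∈ bres L t →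
      ∃ q, bres L (tq q) ⊆ bres L t ∧ c ∈ bres L (tq q) := by
  classical
  set S := hfin.toFinset with hS
  have hmS : ∀ t, bres L t ∈ S := fun t => hfin.mem_toFinset.mpr ⟨t, rfl⟩
  set m : Term F arity → ℕ := fun t => (S.filter (fun R => R ⊂ bres L t)).card with hm
  have hmlt : ∀ t t', bres L t' ⊂ bres L t → m t' < m t := by
    intro t t' hss
    apply Finset.card_lt_card
    rw [Finset.ssubset_def]
    constructor
    · intro R hR
      rw [Finset.mem_filter] at hR ⊢
      exact ⟨hR.1, hR.2.trans hss⟩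
    · intro hsub
      have h1 : bres L t' ∈ S.filter (fun R => R ⊂ bres L t) :=
        Finset.mem_filter.mpr ⟨hmS t', hss⟩
      have h2 := hsub h1
      rw [Finset.mem_filter] at h2
      exact (ssubset_irrefl _) h2.2
  have main : ∀ (n : ℕ) (t : Term F arity) (c : Ctx F arity), m t = n → c ∈ bres L t →
      ∃ q, bres L (tq q) ⊆ bres L t ∧ c ∈ bres L (tq q) := by
    intro n
    induction n using Nat.strong_induction_on with
    | _ n ih =>
      intro t c hn hc
      by_cases hp : IsPrimeRes L t
      · obtain ⟨q, hq⟩ := hsurj t hp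
        exact ⟨q, hq ▸ subset_rfl, hq ▸ hc⟩
      · have hcomp : IsCompositeRes L t := not_not.mp hp
        rw [IsCompositeRes] at hcomp
        rw [hcomp] at hc
        simp only [Set.mem_iUnion, Set.mem_setOf_eq] at hc
        obtain ⟨t', ht', hct'⟩ := hc
        obtain ⟨q, hsub, hmem⟩ := ih (m t') (hn ▸ hmlt t t' ht') t' c rfl hct'
        exact ⟨q, hsub.trans ht'.subset, hmem⟩
  exact fun t c hc => main (m t) t c rfl hc

section Canon

variable {Q : Type} (L : Set (Term F arity)) (tq : Q → Term F arity)

/-- Soundness on terms: if the canonical automaton reaches `q` on `t`,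
then the residual of `t_q` is contained in that of `t`. -/
lemma canon_reach_sub : ∀ {t : Term F arity} {q : Q},
    (canonBU L tq).Reach t q → bres L (tq q) ⊆ bres L t := by
  intro t q h
  induction h with
  | @node f ch qs q hr hch ih =>
    exact Set.Subset.trans hr (bres_node_mono L f _ ch ih)

/-- Soundness on contexts. -/
lemma canon_creach_sub : ∀ {c : Ctx F arity} {q0 q : Q},
    (canonBU L tq).CReach q0 c q →
    ∀ d ∈ bres L (tq q), ccomp d c ∈ bres L (tq q0) := by
  intro c q0 q h
  induction h with
  | hole => intro d hd; rwa [ccomp_hole]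
  | @node f i c sib qs q hr hcc hsib ih =>
    intro d hd
    have h1 : d ∈ bres L (.node f fun j => tq (qs j)) := hr hd
    have h2 : bres L (.node f fun j => tq (qs j))
        ⊆ bres L (.node f fun j => if h : j = i then tq (qs i) else sib j h) := by
      apply bres_node_mono
      intro j
      by_cases hj : j = i
      · subst hj; rw [dif_pos rfl]
      · rw [dif_neg hj]; exact canon_reach_sub L tq (hsib j hj)
    have h3 : ccomp d (.node f i .hole sib) ∈ bres L (tq (qs i)) := by
      show (ccomp d (.node f i .hole sib)).fill (tq (qs i)) ∈ L
      rw [fill_ccomp]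
      exact h2 h1
    have h4 := ih _ h3
    rw [ccomp_assoc] at h4
    exact h4

/-- Completeness on terms. -/
lemma canon_complete_term
    (hPD : ∀ (t : Term F arity) (c : Ctx F arity), c ∈ bres L t →
      ∃ q, bres L (tq q) ⊆ bres L t ∧ c ∈ bres L (tq q)) :
    ∀ (t : Term F arity) (c : Ctx F arity), c ∈ bres L t →
      ∃ q, (canonBU L tq).Reach t q ∧ bres L (tq q) ⊆ bres L t ∧ c ∈ bres L (tq q) := by
  intro t
  induction t with
  | node f ch ih =>
    intro c hc
    obtain ⟨ch', h1, h2⟩ := replace_all L f ch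
      (fun i u => ∃ q, u = tq q ∧ (canonBU L tq).Reach (ch i) q ∧ bres L (tq q) ⊆ bres L (ch i))
      (fun i d hd => by
        obtain ⟨q, hr, hs, hm⟩ := ih i d hd
        exact ⟨tq q, ⟨q, rfl, hr, hs⟩, hm⟩) c hc
    choose qs hq1 hq2 hq3 using h1
    have hch' : ch' = fun i => tq (qs i) := funext hq1
    rw [hch'] at h2
    obtain ⟨q, hsub, hmem⟩ := hPD (.node f fun i => tq (qs i)) c h2
    exact ⟨q, .node hsub hq2, hsub.trans (bres_node_mono L f _ ch hq3), hmem⟩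

/-- The canonical automaton recognizes `L`. -/
lemma canon_lang
    (hPD : ∀ (t : Term F arity) (c : Ctx F arity), c ∈ bres L t →
      ∃ q, bres L (tq q) ⊆ bres L t ∧ c ∈ bres L (tq q)) :
    (canonBU L tq).lang = L := by
  ext t
  constructor
  · rintro ⟨qf, hqf, h⟩
    exact canon_reach_sub L tq h hqf
  · intro ht
    obtain ⟨q, hr, _, hm⟩ := canon_complete_term L tq hPD t Ctx.hole ht
    exact ⟨q, hm, hr⟩

/-- Gluing context runs. -/
lemma creach_comp {Q' : Type} (A : BUTA F arity Q') {q0 q1 q2 : Q'}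
    {e c : Ctx F arity} (h1 : A.CReach q0 e q1) (h2 : A.CReach q1 c q2) :
    A.CReach q0 (ccomp c e) q2 := by
  induction h2 with
  | hole => exact h1
  | node hr hcc hsib ih => exact .node hr ih hsib

/-- Completeness on contexts. -/
lemma canon_complete_ctx
    (hPD : ∀ (t : Term F arity) (c : Ctx F arity), c ∈ bres L t →
      ∃ q, bres L (tq q) ⊆ bres L t ∧ c ∈ bres L (tq q)) :
    ∀ (c : Ctx F arity) (q : Q), c ∈ bres L (tq q) →
      ∃ qf ∈ (canonBU L tq).final, (canonBU L tq).CReach q c qf := by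
  classical
  have main : ∀ (n : ℕ) (c : Ctx F arity), csize c = n → ∀ q : Q, c ∈ bres L (tq q) →
      ∃ qf ∈ (canonBU L tq).final, (canonBU L tq).CReach q c qf := by
    intro n
    induction n using Nat.strong_induction_on with
    | _ n ihn =>
      intro c hcs q hc
      rcases snoc_view c with rfl | ⟨f, i, sib, c₁, rfl, hs⟩
      · exact ⟨q, hc, .hole⟩
      · -- c = ccomp c₁ (.node f i .hole sib)
        have hc₁ : c₁.fill (.node f fun j => if h : j = i then tq q else sib j h) ∈ L := by
          have := hc
          rw [bres, Set.mem_setOf_eq, fill_ccomp] at this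
          exact this
        obtain ⟨ch', h1, h2⟩ := replace_all L f
          (fun j => if h : j = i then tq q else sib j h)
          (fun j u => ∃ q' : Q, u = tq q'
            ∧ bres L (tq q') ⊆ bres L (if h : j = i then tq q else sib j h)
            ∧ (∀ h : j ≠ i, (canonBU L tq).Reach (sib j h) q')
            ∧ (j = i → q' = q))
          (fun j d hd => by
            beta_reduce at hd ⊢
            by_cases hj : j = i
            · subst hj
              rw [dif_pos rfl] at hd ⊢
              exact ⟨tq q, ⟨q, rfl, subset_rfl, fun h => absurd rfl h, fun _ => rfl⟩, hd⟩
            · rw [dif_neg hj] at hd ⊢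
              obtain ⟨q', hr, hsb, hm⟩ := canon_complete_term L tq hPD (sib j hj) d hd
              exact ⟨tq q', ⟨q', rfl, hsb, fun h => hr, fun h => absurd h hj⟩, hm⟩)
          c₁ hc₁
        choose qs hqs1 hqs2 hqs3 hqs4 using h1
        have hch' : ch' = fun j => tq (qs j) := funext hqs1
        rw [hch'] at h2
        obtain ⟨q₁, hrule, hmem⟩ := hPD (.node f fun j => tq (qs j)) c₁ h2
        obtain ⟨qf, hqf, hcr₁⟩ := ihn (csize c₁)
          (by omega) c₁ rfl q₁ hmem
        refine ⟨qf, hqf, creach_comp (canonBU L tq) ?_ hcr₁⟩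
        have hqi : qs i = q := hqs4 i rfl
        refine .node (qs := qs) hrule ?_ (fun j hj => hqs3 j hj)
        rw [hqi]
        exact .hole
  exact fun c q hc => main (csize c) c rfl q hc

end Canon

end CanonAux

open CanonAux in
/-- For a regular tree language `L`, the canonical bottom-up automaton
`A_can` is a ↑-RFTA; more precisely, for every state `q`, `C_q = t_q⁻¹L`. -/
theorem canonBU_isRFTA {F Q : Type} [Fintype F] [Fintype Q] {arity : F → ℕ}
    (_hconst : ∃ a : F, arity a = 0) (L : Set (Term F arity))
    (hreg : ∃ (Q' : Type) (_ : Fintype Q') (A : BUTA F arity Q'), A.lang = L)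
    (tq : Q → Term F arity)
    (hprime : ∀ q, IsPrimeRes L (tq q))
    (hinj : ∀ q q', bres L (tq q) = bres L (tq q') → q = q')
    (hsurj : ∀ t : Term F arity, IsPrimeRes L t → ∃ q, bres L (tq q) = bres L t) :
    IsRFTA (canonBU L tq) ∧
    ∀ q : Q, (canonBU L tq).stateLang q = bres L (tq q) := by
  classical
  have hPD := primeDecomp L tq (bres_range_finite L hreg) hsurj
  have hmain : ∀ q : Q, (canonBU L tq).stateLang q = bres L (tq q) := by
    intro q
    ext c
    constructor
    · rintro ⟨qf, hqf, hcr⟩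
      have h := canon_creach_sub L tq hcr Ctx.hole hqf
      exact h
    · intro hc
      exact canon_complete_ctx L tq hPD c q hc
  refine ⟨?_, hmain⟩
  intro q
  refine ⟨tq q, ?_⟩
  rw [canon_lang L tq hPD]
  exact hmain q
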